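/- For all c ∈ ℝ and λ in the common domain, ψ_{G,c}(λ) = λ²/(2(1−cλ)) ≤ ψ_{E,3c/2}(λ) = (−log(1−(3c/2)λ) − (3c/2)λ)/(3c/2)²; i.e., sub-gamma with scale c implies sub-exponential with scale 3c/2. -/

import Mathlib

/-- The sub-exponential function `ψ_{E,c} λ = (−log(1−cλ) − cλ)/c²`, with the
limiting value `ψ_{E,0} = λ²/2` at `c = 0`. -/
noncomputable def psiE (c l : ℝ) : ℝ :=
  if c = 0 then l ^ 2 / 2 else (-Real.log (1 - c * l) - c * l) / c ^ 2

/-- For every `c ∈ ℝ` and `λ ≥ 0` in the common domain of `ψ_{G,c}` and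
`ψ_{E,3c/2}`: `ψ_{G,c} λ = λ²/(2(1−cλ)) ≤ ψ_{E,3c/2} λ`; i.e. sub-gamma with
scale `c` implies sub-exponential with scale `3c/2`. -/
theorem subGamma_le_subExponential (c l : ℝ) (hl0 : 0 ≤ l)
    (hG : c * l < 1) (hE : 3 * c / 2 * l < 1) :
    l ^ 2 / (2 * (1 - c * l)) ≤ psiE (3 * c / 2) l := by
  rcases eq_or_ne c 0 with hc | hc
  · subst hc; simp [psiE]
  set c' : ℝ := 3 * c / 2 with hc'
  have hc'0 : c' ≠ 0 := by
    simp only [hc']; intro h; apply hc; linarith [h]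
  rw [psiE, if_neg hc'0]
  have hGx : ∀ x ∈ Set.Icc 0 l, 0 < 1 - c * x := by
    intro x hx
    rcases le_or_gt c 0 with h | h
    · nlinarith [hx.1, mul_nonpos_of_nonpos_of_nonneg h hx.1]
    · nlinarith [hx.2, mul_le_mul_of_nonneg_left hx.2 h.le]
  have hEx : ∀ x ∈ Set.Icc 0 l, 0 < 1 - c' * x := by
    intro x hx
    rcases le_or_gt c' 0 with h | h
    · nlinarith [hx.1, mul_nonpos_of_nonpos_of_nonneg h hx.1]
    · nlinarith [hx.2, mul_le_mul_of_nonneg_left hx.2 h.le]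
  set f : ℝ → ℝ := fun x =>
    (-Real.log (1 - c' * x) - c' * x) / c' ^ 2 - x ^ 2 / (2 * (1 - c * x)) with hf
  have hder : ∀ x ∈ Set.Icc 0 l, HasDerivAt f
      ((-(-c') / (1 - c' * x) - c') / c' ^ 2 -
        ((2 * x ^ 1) * (2 * (1 - c * x)) - x ^ 2 * (2 * (-c))) / (2 * (1 - c * x)) ^ 2) x := by
    intro x hx
    have hE1 : (1 - c' * x) ≠ 0 := (hEx x hx).ne'
    have hG1 : (2 * (1 - c * x)) ≠ 0 := by
      have := hGx x hx; positivity
    have h1 : HasDerivAt (fun x : ℝ => 1 - c' * x) (-c') x := by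
      simpa using ((hasDerivAt_id x).const_mul c').const_sub 1
    have h2 : HasDerivAt (fun x : ℝ => 1 - c * x) (-c) x := by
      simpa using ((hasDerivAt_id x).const_mul c).const_sub 1
    have hlin : HasDerivAt (fun x : ℝ => c' * x) c' x := by
      simpa using (hasDerivAt_id x).const_mul c'
    have hnum : HasDerivAt (fun x : ℝ => -Real.log (1 - c' * x) - c' * x)
        (-(-c' / (1 - c' * x)) - c') x :=
      ((h1.log hE1).neg).sub hlin
    have hg : HasDerivAt (fun x : ℝ => x ^ 2 / (2 * (1 - c * x)))
        (((2 * x ^ 1) * (2 * (1 - c * x)) - x ^ 2 * (2 * (-c))) / (2 * (1 - c * x)) ^ 2) x := by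
      exact (hasDerivAt_pow 2 x).div (h2.const_mul 2) hG1 |>.congr_deriv (by push_cast; ring)
    have := (hnum.div_const (c' ^ 2)).sub hg
    refine this.congr_deriv ?_
    ring
  have hmono : MonotoneOn f (Set.Icc 0 l) := by
    apply monotoneOn_of_deriv_nonneg (convex_Icc 0 l)
    · exact fun x hx => (hder x hx).continuousAt.continuousWithinAt
    · intro x hx
      rw [interior_Icc] at hx
      exact ((hder x (Set.Ioo_subset_Icc_self hx)).differentiableAt).differentiableWithinAt
    · intro x hx
      rw [interior_Icc] at hx
      have hx' := Set.Ioo_subset_Icc_self hx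
      rw [(hder x hx').deriv]
      have hE1 := hEx x hx'
      have hG1 := hGx x hx'
      have hx0 : (0:ℝ) ≤ x := hx'.1
      have key : ((2 * x ^ 1) * (2 * (1 - c * x)) - x ^ 2 * (2 * (-c))) / (2 * (1 - c * x)) ^ 2
          ≤ (-(-c') / (1 - c' * x) - c') / c' ^ 2 := by
        have hsimp : (-(-c') / (1 - c' * x) - c') / c' ^ 2 = x / (1 - c' * x) := by
          field_simp
          ring
        rw [hsimp, div_le_div_iff₀ (by positivity) hE1]
        simp only [hc']
        nlinarith [mul_nonneg (sq_nonneg c) (pow_nonneg hx0 3), sq_nonneg (c*x), hG1, hE1]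
      linarith
  have h0 : f 0 = 0 := by simp [hf]
  have hl : f 0 ≤ f l := hmono (Set.left_mem_Icc.mpr hl0) (Set.right_mem_Icc.mpr hl0) hl0
  rw [h0, hf] at hl
  simp only at hl
  linarith
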